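/- Let ≺ be a left-invariant total order on B_3 whose positive cone is exactly the union of the set of σ1-positive elements and the set {σ2^k : k ≥ 1}. Then the cyclic subgroup ⟨σ2⟩ is ≺-convex and the restriction of ≺ to ⟨σ2⟩ is Conradian, while the restriction of ≺ to every ≺-convex subgroup strictly containing ⟨σ2⟩ (in particular to B_3 itself) is not Conradian. That is, ⟨σ2⟩ is the Conradian soul of ≺. -/

import Mathlib

/-- The single braid relation of `B₃`: σ₁σ₂σ₁ = σ₂σ₁σ₂. -/
def braidRels3 : Set (FreeGroup (Fin 2)) :=
  { FreeGroup.of 0 * FreeGroup.of 1 * FreeGroup.of 0 *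
      (FreeGroup.of 1 * FreeGroup.of 0 * FreeGroup.of 1)⁻¹ }

/-- The braid group `B₃ = ⟨σ₁, σ₂ | σ₁σ₂σ₁ = σ₂σ₁σ₂⟩`. -/
abbrev B₃ : Type := PresentedGroup braidRels3

def σ₁ : B₃ := PresentedGroup.of 0
def σ₂ : B₃ := PresentedGroup.of 1

/-- A left-invariant total order (left order) on a group `G`. -/
def IsLeftOrder {G : Type*} [Group G] (r : G → G → Prop) : Prop :=
  IsStrictTotalOrder G r ∧ ∀ h f g : G, r f g → r (h * f) (h * g)

/-- A subgroup `C` is convex for `r` if `f ≺ g ≺ h` with `f, h ∈ C` implies `g ∈ C`. -/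
def IsConvexSubgroup {G : Type*} [Group G] (r : G → G → Prop) (C : Subgroup G) : Prop :=
  ∀ f g h : G, f ∈ C → h ∈ C → r f g → r g h → g ∈ C

/-- The restriction of `r` to the subgroup `C` is Conradian. -/
def IsConradianOn {G : Type*} [Group G] (r : G → G → Prop) (C : Subgroup G) : Prop :=
  ∀ f g : G, f ∈ C → g ∈ C → r 1 f → r 1 g → ∃ k : ℕ, r g (f * g ^ k)

/-- The group element represented by a single letter `σᵢ^{±1}`
(`true` = positive letter, `false` = inverse letter). -/
def letterB₃ (x : Fin 2 × Bool) : B₃ :=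
  if x.2 then PresentedGroup.of x.1 else (PresentedGroup.of x.1)⁻¹

/-- An element of `B₃` is σ₁-positive if it is represented by some word in
`σ₁^{±1}, σ₂^{±1}` containing at least one `σ₁` and no `σ₁⁻¹`. -/
def IsSigmaOnePositive (β : B₃) : Prop :=
  ∃ w : List (Fin 2 × Bool),
    (w.map letterB₃).prod = β ∧ ((0 : Fin 2), true) ∈ w ∧ ((0 : Fin 2), false) ∉ w

lemma braid_eq : σ₁ * σ₂ * σ₁ = σ₂ * σ₁ * σ₂ := by
  have h : (PresentedGroup.mk braidRels3)
      (FreeGroup.of 0 * FreeGroup.of 1 * FreeGroup.of 0 *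
        (FreeGroup.of 1 * FreeGroup.of 0 * FreeGroup.of 1)⁻¹) = 1 := by
    apply (QuotientGroup.eq_one_iff _).2
    exact Subgroup.subset_normalClosure rfl
  simp only [map_mul, map_inv] at h
  have h' : σ₁ * σ₂ * σ₁ * (σ₂ * σ₁ * σ₂)⁻¹ = 1 := by
    simpa [σ₁, σ₂, PresentedGroup.of, mul_assoc] using h
  exact mul_inv_eq_one.mp h'

lemma conj1 : σ₂⁻¹ * σ₁ * σ₂ = σ₁ * σ₂ * σ₁⁻¹ := by
  calc σ₂⁻¹ * σ₁ * σ₂ = σ₂⁻¹ * (σ₁ * σ₂ * σ₁) * σ₁⁻¹ := by group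
    _ = σ₂⁻¹ * (σ₂ * σ₁ * σ₂) * σ₁⁻¹ := by rw [braid_eq]
    _ = σ₁ * σ₂ * σ₁⁻¹ := by group

@[simp] lemma letter_0T : letterB₃ ((0 : Fin 2), true) = σ₁ := rfl
@[simp] lemma letter_1T : letterB₃ ((1 : Fin 2), true) = σ₂ := rfl
@[simp] lemma letter_0F : letterB₃ ((0 : Fin 2), false) = σ₁⁻¹ := rfl
@[simp] lemma letter_1F : letterB₃ ((1 : Fin 2), false) = σ₂⁻¹ := rfl

lemma sop_mul {a b : B₃} (ha : IsSigmaOnePositive a) (hb : IsSigmaOnePositive b) :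
    IsSigmaOnePositive (a * b) := by
  obtain ⟨w1, hp1, hm1, hn1⟩ := ha
  obtain ⟨w2, hp2, hm2, hn2⟩ := hb
  exact ⟨w1 ++ w2, by simp [hp1, hp2], by simp [hm1], by simp [hn1, hn2]⟩

lemma word_sigma2 (z : ℤ) : ∃ l : List (Fin 2 × Bool),
    (l.map letterB₃).prod = σ₂ ^ z ∧ ∀ b : Bool, ((0 : Fin 2), b) ∉ l := by
  rcases le_or_gt 0 z with hz | hz
  · refine ⟨List.replicate z.toNat ((1 : Fin 2), true), ?_, ?_⟩
    · simp [List.map_replicate, List.prod_replicate, ← zpow_natCast, Int.toNat_of_nonneg hz]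
    · intro b; simp [List.mem_replicate]
  · refine ⟨List.replicate (-z).toNat ((1 : Fin 2), false), ?_, ?_⟩
    · have hz' : (((-z).toNat : ℤ)) = -z := Int.toNat_of_nonneg (by omega)
      simp only [List.map_replicate, letter_1F, List.prod_replicate]
      rw [inv_pow, ← zpow_natCast, hz', ← zpow_neg, neg_neg]
    · intro b; simp [List.mem_replicate]

lemma sop_mul_zpow (a : B₃) (z : ℤ) (ha : IsSigmaOnePositive a) :
    IsSigmaOnePositive (a * σ₂ ^ z) := by
  obtain ⟨w1, hp1, hm1, hn1⟩ := ha
  obtain ⟨l, hl, hnl⟩ := word_sigma2 z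
  exact ⟨w1 ++ l, by simp [hp1, hl], by simp [hm1], by simp [hn1, hnl false]⟩

lemma sop_sigma1 : IsSigmaOnePositive σ₁ :=
  ⟨[((0 : Fin 2), true)], by simp, by simp, by simp⟩

lemma sop_g : IsSigmaOnePositive (σ₁ * σ₂ * σ₁⁻¹) := by
  refine ⟨[((1:Fin 2), false), ((0:Fin 2), true), ((1:Fin 2), true)], ?_, by simp, by simp⟩
  simp only [List.map_cons, List.map_nil, List.prod_cons, List.prod_nil, letter_0T, letter_1T,
    letter_1F, mul_one]
  rw [← mul_assoc, conj1]

lemma sop_f : IsSigmaOnePositive (σ₁ * σ₂ * σ₁⁻¹ * σ₁⁻¹ * σ₁⁻¹) := by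
  refine ⟨[((1:Fin 2), false), ((1:Fin 2), false), ((1:Fin 2), false),
      ((0:Fin 2), true), ((1:Fin 2), true)], ?_, by simp, by simp⟩
  simp only [List.map_cons, List.map_nil, List.prod_cons, List.prod_nil, letter_0T, letter_1T,
    letter_1F, mul_one]
  calc σ₂⁻¹ * (σ₂⁻¹ * (σ₂⁻¹ * (σ₁ * σ₂)))
      = σ₂⁻¹ * (σ₂⁻¹ * (σ₂⁻¹ * σ₁ * σ₂)) := by group
    _ = σ₂⁻¹ * (σ₂⁻¹ * (σ₁ * σ₂ * σ₁⁻¹)) := by rw [conj1]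
    _ = σ₂⁻¹ * (σ₂⁻¹ * σ₁ * σ₂ * σ₁⁻¹) := by group
    _ = σ₂⁻¹ * (σ₁ * σ₂ * σ₁⁻¹ * σ₁⁻¹) := by rw [conj1]
    _ = σ₂⁻¹ * σ₁ * σ₂ * σ₁⁻¹ * σ₁⁻¹ := by group
    _ = (σ₂⁻¹ * σ₁ * σ₂) * σ₁⁻¹ * σ₁⁻¹ := by group
    _ = σ₁ * σ₂ * σ₁⁻¹ * σ₁⁻¹ * σ₁⁻¹ := by rw [conj1]

lemma sop_mid (k : ℕ) : IsSigmaOnePositive (σ₁ * (σ₂⁻¹) ^ k * σ₁) := by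
  refine ⟨((0:Fin 2), true) :: (List.replicate k ((1:Fin 2), false) ++ [((0:Fin 2), true)]),
    ?_, by simp, by simp [List.mem_replicate]⟩
  simp [List.map_replicate, List.prod_replicate, mul_assoc]

lemma key_conj (k : ℕ) :
    ((σ₁ * σ₂ * σ₁⁻¹) ^ k)⁻¹ * (σ₁ * σ₂ * σ₁⁻¹ * σ₁⁻¹ * σ₁⁻¹)⁻¹ * (σ₁ * σ₂ * σ₁⁻¹)
      = σ₁ * (σ₂⁻¹) ^ k * σ₁ := by
  induction k with
  | zero =>
    simp only [pow_zero, inv_one, one_mul, mul_one]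
    rw [← pow_two]
    group
  | succ k ih =>
    have h2 : (((σ₁ * σ₂ * σ₁⁻¹)) ^ (k+1))⁻¹ * (σ₁ * σ₂ * σ₁⁻¹ * σ₁⁻¹ * σ₁⁻¹)⁻¹ * (σ₁ * σ₂ * σ₁⁻¹)
        = (σ₁ * σ₂ * σ₁⁻¹)⁻¹ *
          (((σ₁ * σ₂ * σ₁⁻¹) ^ k)⁻¹ * (σ₁ * σ₂ * σ₁⁻¹ * σ₁⁻¹ * σ₁⁻¹)⁻¹ * (σ₁ * σ₂ * σ₁⁻¹)) := by
      rw [pow_succ]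
      generalize (σ₁ * σ₂ * σ₁⁻¹) ^ k = X
      group
    rw [h2, ih, pow_succ']
    generalize (σ₂⁻¹) ^ k = t
    group

lemma letter_cases (x : Fin 2 × Bool) : x = ((0:Fin 2), true) ∨ x = ((0:Fin 2), false) ∨
    x = ((1:Fin 2), true) ∨ x = ((1:Fin 2), false) := by
  revert x; decide

lemma sigma2_only : ∀ s : List (Fin 2 × Bool), ((0:Fin 2), true) ∉ s → ((0:Fin 2), false) ∉ s →
    ∃ d : ℤ, (s.map letterB₃).prod = σ₂ ^ d := by
  intro s
  induction s with
  | nil => exact fun _ _ => ⟨0, by simp⟩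
  | cons x s ih =>
    intro h1 h2
    obtain ⟨d, hd⟩ := ih (fun h => h1 (List.mem_cons_of_mem _ h))
      (fun h => h2 (List.mem_cons_of_mem _ h))
    rcases letter_cases x with hx | hx | hx | hx
    · exact absurd (hx ▸ List.mem_cons_self) h1
    · exact absurd (hx ▸ List.mem_cons_self) h2
    · subst hx
      exact ⟨1 + d, by rw [List.map_cons, List.prod_cons, letter_1T, hd, zpow_add, zpow_one]⟩
    · subst hx
      exact ⟨-1 + d, by rw [List.map_cons, List.prod_cons, letter_1F, hd, zpow_add,
        zpow_neg_one]⟩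

lemma decomp : ∀ w : List (Fin 2 × Bool), ((0:Fin 2), true) ∈ w → ((0:Fin 2), false) ∉ w →
    ∃ (c : ℤ) (s : List (Fin 2 × Bool)), ((0:Fin 2), false) ∉ s ∧
      (w.map letterB₃).prod = σ₂ ^ c * (σ₁ * (s.map letterB₃).prod) := by
  intro w
  induction w with
  | nil => intro h; exact absurd h List.not_mem_nil
  | cons x w ih =>
    intro h1 h2
    by_cases hx : x = ((0:Fin 2), true)
    · subst hx
      refine ⟨0, w, fun h => h2 (List.mem_cons_of_mem _ h), ?_⟩
      simp
    · have hxw : ((0:Fin 2), true) ∈ w := by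
        rcases List.mem_cons.mp h1 with h | h
        · exact absurd h.symm hx
        · exact h
      obtain ⟨c, s, hs, hp⟩ := ih hxw (fun h => h2 (List.mem_cons_of_mem _ h))
      rcases letter_cases x with hxx | hxx | hxx | hxx
      · exact absurd hxx hx
      · exact absurd (hxx ▸ List.mem_cons_self) h2
      · subst hxx
        refine ⟨1 + c, s, hs, ?_⟩
        rw [List.map_cons, List.prod_cons, letter_1T, hp, zpow_add, zpow_one, mul_assoc]
      · subst hxx
        refine ⟨-1 + c, s, hs, ?_⟩
        rw [List.map_cons, List.prod_cons, letter_1F, hp, zpow_add, zpow_neg_one, mul_assoc]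

/-- For a left order on `B₃` whose positive cone consists exactly of the
σ₁-positive elements together with the positive powers of σ₂ (the Dehornoy
ordering), the subgroup `⟨σ₂⟩` is convex with Conradian restriction, while the
restriction to any strictly larger convex subgroup is not Conradian: `⟨σ₂⟩` is
the Conradian soul. -/
theorem stmt_14 (r : B₃ → B₃ → Prop) (hr : IsLeftOrder r)
    (hcone : {β : B₃ | r 1 β} =
      {β : B₃ | IsSigmaOnePositive β} ∪ {β : B₃ | ∃ k : ℕ, 1 ≤ k ∧ β = σ₂ ^ k}) :
    IsConvexSubgroup r (Subgroup.zpowers σ₂) ∧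
    IsConradianOn r (Subgroup.zpowers σ₂) ∧
    ∀ C : Subgroup B₃, IsConvexSubgroup r C → Subgroup.zpowers σ₂ < C →
      ¬ IsConradianOn r C := by
  obtain ⟨hsto, hmul⟩ := hr
  have htrans : ∀ {a b c : B₃}, r a b → r b c → r a c :=
    fun h1 h2 => hsto.toIsStrictOrder.toIsTrans.trans _ _ _ h1 h2
  have hirr : ∀ a : B₃, ¬ r a a := by haveI := hsto; exact irrefl
  have htri : ∀ a b : B₃, r a b ∨ a = b ∨ r b a := by haveI := hsto; exact trichotomous
  have hpos : ∀ x : B₃, r 1 x ↔ IsSigmaOnePositive x ∨ ∃ k : ℕ, 1 ≤ k ∧ x = σ₂ ^ k := by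
    intro x
    have := Set.ext_iff.mp hcone x
    simpa using this
  have hposσ₂ : r 1 σ₂ := (hpos σ₂).2 (Or.inr ⟨1, le_refl 1, (pow_one σ₂).symm⟩)
  -- powers of σ₂ are never σ₁-positive
  have hnotpow : ∀ z : ℤ, ¬ IsSigmaOnePositive (σ₂ ^ z) := by
    intro z hz
    have h2 : IsSigmaOnePositive (σ₂ ^ z * σ₂ ^ (-z - 1)) := sop_mul_zpow _ _ hz
    rw [← zpow_add, show z + (-z - 1) = -1 by ring, zpow_neg_one] at h2
    have hneg : r 1 σ₂⁻¹ := (hpos _).2 (Or.inl h2)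
    have h3 : r σ₂ 1 := by
      have := hmul σ₂ 1 σ₂⁻¹ hneg
      simpa using this
    exact hirr 1 (htrans hposσ₂ h3)
  -- convexity of ⟨σ₂⟩
  have hconvex : IsConvexSubgroup r (Subgroup.zpowers σ₂) := by
    intro f g h hf hh hfg hgh
    have h1g : r 1 (f⁻¹ * g) := by
      have := hmul f⁻¹ f g hfg
      rwa [inv_mul_cancel] at this
    have hq : r 1 (g⁻¹ * h) := by
      have := hmul g⁻¹ g h hgh
      rwa [inv_mul_cancel] at this
    have hgf : g = f * (f⁻¹ * g) := by group
    rcases (hpos _).1 h1g with hsop1 | ⟨k, _, hk⟩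
    · rcases (hpos _).1 hq with hsop2 | ⟨k, _, hk⟩
      · exfalso
        have : (f⁻¹ * g) * (g⁻¹ * h) = f⁻¹ * h := by group
        have hsop3 : IsSigmaOnePositive (f⁻¹ * h) := this ▸ sop_mul hsop1 hsop2
        obtain ⟨z, hz⟩ := Subgroup.mem_zpowers_iff.mp (mul_mem (inv_mem hf) hh)
        exact hnotpow z (hz ▸ hsop3)
      · have : g = h * (g⁻¹ * h)⁻¹ := by group
        rw [this, hk]
        exact mul_mem hh (inv_mem (pow_mem (Subgroup.mem_zpowers σ₂) k))
    · rw [hgf, hk]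
      exact mul_mem hf (pow_mem (Subgroup.mem_zpowers σ₂) k)
  refine ⟨hconvex, ?_, ?_⟩
  · -- Conradian on ⟨σ₂⟩
    intro f g hf hg h1f _
    refine ⟨1, ?_⟩
    obtain ⟨a, ha⟩ := Subgroup.mem_zpowers_iff.mp hf
    obtain ⟨b, hb⟩ := Subgroup.mem_zpowers_iff.mp hg
    have hc : f * g = g * f := by
      rw [← ha, ← hb, ← zpow_add, ← zpow_add, add_comm]
    have := hmul g 1 f h1f
    rw [mul_one] at this
    rwa [pow_one, hc]
  · -- no larger convex subgroup is Conradian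
    intro C hconv hlt hCon
    have hσ₂C : σ₂ ∈ C := le_of_lt hlt (Subgroup.mem_zpowers σ₂)
    have hσ₂zC : ∀ z : ℤ, σ₂ ^ z ∈ C := fun z => zpow_mem hσ₂C z
    -- main step: any positive element of C outside ⟨σ₂⟩ puts σ₁ in C
    have main : ∀ β : B₃, β ∈ C → β ∉ Subgroup.zpowers σ₂ → r 1 β → σ₁ ∈ C := by
      intro β hβC hβn hβpos
      rcases (hpos β).1 hβpos with hsop | ⟨k, _, hk⟩
      · obtain ⟨w, hwprod, hw1, hw0⟩ := hsop
        obtain ⟨c, s, hs0, hsplit⟩ := decomp w hw1 hw0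
        have hδC : σ₂ ^ (-c) * β ∈ C := mul_mem (hσ₂zC (-c)) hβC
        have hδeq : σ₂ ^ (-c) * β = σ₁ * (s.map letterB₃).prod := by
          rw [← hwprod, hsplit, ← mul_assoc, ← zpow_add, neg_add_cancel, zpow_zero, one_mul]
        by_cases hmem : ((0:Fin 2), true) ∈ s
        · have hγpos : IsSigmaOnePositive (σ₁ * σ₂⁻¹) :=
            ⟨[((0:Fin 2), true), ((1:Fin 2), false)], by simp, by simp, by simp⟩
          have h1γ : r 1 (σ₁ * σ₂⁻¹) := (hpos _).2 (Or.inl hγpos)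
          have hmidpos : IsSigmaOnePositive (σ₂ * (s.map letterB₃).prod) :=
            ⟨((1:Fin 2), true) :: s, by simp, List.mem_cons_of_mem _ hmem, by simp [hs0]⟩
          have hγδ : r (σ₁ * σ₂⁻¹) (σ₂ ^ (-c) * β) := by
            have h0 : r 1 ((σ₁ * σ₂⁻¹)⁻¹ * (σ₂ ^ (-c) * β)) := by
              rw [hδeq, show (σ₁ * σ₂⁻¹)⁻¹ * (σ₁ * (s.map letterB₃).prod)
                = σ₂ * (s.map letterB₃).prod by group]
              exact (hpos _).2 (Or.inl hmidpos)
            have := hmul (σ₁ * σ₂⁻¹) 1 _ h0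
            rwa [mul_one, mul_inv_cancel_left] at this
          have hγC : σ₁ * σ₂⁻¹ ∈ C :=
            hconv 1 (σ₁ * σ₂⁻¹) (σ₂ ^ (-c) * β) (one_mem C) hδC h1γ hγδ
          have : σ₁ = σ₁ * σ₂⁻¹ * σ₂ := by group
          rw [this]
          exact mul_mem hγC hσ₂C
        · obtain ⟨d, hd⟩ := sigma2_only s hmem hs0
          set M : ℕ := (1 - d).toNat + 1 with hM
          have hγpos : IsSigmaOnePositive (σ₁ * σ₂ ^ (-(M:ℤ))) := sop_mul_zpow σ₁ _ sop_sigma1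
          have h1γ : r 1 (σ₁ * σ₂ ^ (-(M:ℤ))) := (hpos _).2 (Or.inl hγpos)
          have hdiff : (σ₁ * σ₂ ^ (-(M:ℤ)))⁻¹ * (σ₂ ^ (-c) * β) = σ₂ ^ ((M:ℤ) + d) := by
            rw [hδeq, hd, zpow_add]
            group
          have hMd : 1 ≤ (M:ℤ) + d := by
            have := Int.self_le_toNat (1 - d)
            push_cast [hM]
            omega
          have hmidpos : r 1 (σ₂ ^ ((M:ℤ) + d)) := by
            refine (hpos _).2 (Or.inr ⟨((M:ℤ) + d).toNat, by omega, ?_⟩)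
            rw [← zpow_natCast, Int.toNat_of_nonneg (by omega)]
          have hγδ : r (σ₁ * σ₂ ^ (-(M:ℤ))) (σ₂ ^ (-c) * β) := by
            have h0 : r 1 ((σ₁ * σ₂ ^ (-(M:ℤ)))⁻¹ * (σ₂ ^ (-c) * β)) := by
              rw [hdiff]; exact hmidpos
            have := hmul (σ₁ * σ₂ ^ (-(M:ℤ))) 1 _ h0
            rwa [mul_one, mul_inv_cancel_left] at this
          have hγC : σ₁ * σ₂ ^ (-(M:ℤ)) ∈ C :=
            hconv 1 _ (σ₂ ^ (-c) * β) (one_mem C) hδC h1γ hγδ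
          have : σ₁ = σ₁ * σ₂ ^ (-(M:ℤ)) * σ₂ ^ (M:ℤ) := by
            rw [mul_assoc, ← zpow_add, neg_add_cancel, zpow_zero, mul_one]
          rw [this]
          exact mul_mem hγC (hσ₂zC _)
      · exact absurd (hk ▸ pow_mem (Subgroup.mem_zpowers σ₂) k) hβn
    obtain ⟨β, hβC, hβn⟩ := SetLike.exists_of_lt hlt
    have hσ₁C : σ₁ ∈ C := by
      rcases htri 1 β with hp | he | hn
      · exact main β hβC hβn hp
      · exact absurd (he ▸ one_mem (Subgroup.zpowers σ₂)) hβn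
      · have hp : r 1 β⁻¹ := by
          have := hmul β⁻¹ β 1 hn
          rwa [inv_mul_cancel, mul_one] at this
        refine main β⁻¹ (inv_mem hβC) (fun hmem => hβn ?_) hp
        simpa using inv_mem hmem
    -- the crossed pair
    have hFC : σ₁ * σ₂ * σ₁⁻¹ * σ₁⁻¹ * σ₁⁻¹ ∈ C :=
      mul_mem (mul_mem (mul_mem (mul_mem hσ₁C hσ₂C) (inv_mem hσ₁C)) (inv_mem hσ₁C))
        (inv_mem hσ₁C)
    have hGC : σ₁ * σ₂ * σ₁⁻¹ ∈ C := mul_mem (mul_mem hσ₁C hσ₂C) (inv_mem hσ₁C)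
    have hFpos : r 1 (σ₁ * σ₂ * σ₁⁻¹ * σ₁⁻¹ * σ₁⁻¹) := (hpos _).2 (Or.inl sop_f)
    have hGpos : r 1 (σ₁ * σ₂ * σ₁⁻¹) := (hpos _).2 (Or.inl sop_g)
    obtain ⟨k, hk⟩ := hCon _ _ hFC hGC hFpos hGpos
    have hlt2 : r (σ₁ * σ₂ * σ₁⁻¹ * σ₁⁻¹ * σ₁⁻¹ * (σ₁ * σ₂ * σ₁⁻¹) ^ k) (σ₁ * σ₂ * σ₁⁻¹) := by
      have heq : (σ₁ * σ₂ * σ₁⁻¹ * σ₁⁻¹ * σ₁⁻¹ * (σ₁ * σ₂ * σ₁⁻¹) ^ k)⁻¹ * (σ₁ * σ₂ * σ₁⁻¹)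
          = σ₁ * (σ₂⁻¹) ^ k * σ₁ := by
        rw [mul_inv_rev, mul_assoc]
        rw [show (σ₁ * σ₂ * σ₁⁻¹ * σ₁⁻¹ * σ₁⁻¹)⁻¹ * (σ₁ * σ₂ * σ₁⁻¹)
          = (σ₁ * σ₂ * σ₁⁻¹ * σ₁⁻¹ * σ₁⁻¹)⁻¹ * (σ₁ * σ₂ * σ₁⁻¹) from rfl]
        rw [← mul_assoc]
        exact key_conj k
      have h0 : r 1 ((σ₁ * σ₂ * σ₁⁻¹ * σ₁⁻¹ * σ₁⁻¹ * (σ₁ * σ₂ * σ₁⁻¹) ^ k)⁻¹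
          * (σ₁ * σ₂ * σ₁⁻¹)) := by
        rw [heq]
        exact (hpos _).2 (Or.inl (sop_mid k))
      have := hmul (σ₁ * σ₂ * σ₁⁻¹ * σ₁⁻¹ * σ₁⁻¹ * (σ₁ * σ₂ * σ₁⁻¹) ^ k) 1 _ h0
      rwa [mul_one, mul_inv_cancel_left] at this
    exact hirr _ (htrans hk hlt2)
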